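/- With H₀ and H as in the discrete model on ℓ²(ℤ^d), for every r > 0 the operator H^r [H₀, H] H^{-r} is bounded on ℓ²(ℤ^d); equivalently [H₀, H] is bounded on the weighted space 𝓗^{2r} = {u : Σ_n ⟨n⟩^{2r}|u(n)|² < ∞}. -/

import Mathlib

open scoped ENNReal

section mulShift

variable {α : Type*}

private lemma mulShift_sum_bound (c : α → ℂ) (e : α ≃ α) {M : ℝ} (hM0 : 0 ≤ M)
    (hM : ∀ n, ‖c n‖ ≤ M) (u : lp (fun _ : α => ℂ) 2) (s : Finset α) :
    ∑ n ∈ s, ‖c n * (u : ∀ _ : α, ℂ) (e n)‖ ^ (2 : ℝ≥0∞).toReal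
      ≤ (M * ‖u‖) ^ (2 : ℝ≥0∞).toReal := by
  have h2 : (2 : ℝ≥0∞).toReal = (2 : ℝ) := by norm_num
  rw [h2]
  have hsum : ∑ m ∈ s.map e.toEmbedding, ‖(u : ∀ _ : α, ℂ) m‖ ^ (2:ℝ) ≤ ‖u‖ ^ (2:ℝ) := by
    have := lp.sum_rpow_le_norm_rpow (p := 2) (by norm_num) u (s.map e.toEmbedding)
    rwa [h2] at this
  calc ∑ n ∈ s, ‖c n * (u : ∀ _ : α, ℂ) (e n)‖ ^ (2:ℝ)
      ≤ ∑ n ∈ s, (M * ‖(u : ∀ _ : α, ℂ) (e n)‖) ^ (2:ℝ) := by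
        refine Finset.sum_le_sum fun n _ => ?_
        refine Real.rpow_le_rpow (norm_nonneg _) ?_ (by norm_num)
        rw [norm_mul]
        exact mul_le_mul_of_nonneg_right (hM n) (norm_nonneg _)
    _ = ∑ n ∈ s, M ^ (2:ℝ) * ‖(u : ∀ _ : α, ℂ) (e n)‖ ^ (2:ℝ) := by
        refine Finset.sum_congr rfl fun n _ => ?_
        exact Real.mul_rpow hM0 (norm_nonneg _)
    _ = M ^ (2:ℝ) * ∑ n ∈ s, ‖(u : ∀ _ : α, ℂ) (e n)‖ ^ (2:ℝ) := by
        rw [Finset.mul_sum]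
    _ = M ^ (2:ℝ) * ∑ m ∈ s.map e.toEmbedding, ‖(u : ∀ _ : α, ℂ) m‖ ^ (2:ℝ) := by
        rw [Finset.sum_map]; rfl
    _ ≤ M ^ (2:ℝ) * ‖u‖ ^ (2:ℝ) :=
        mul_le_mul_of_nonneg_left hsum (Real.rpow_nonneg hM0 _)
    _ = (M * ‖u‖) ^ (2:ℝ) := (Real.mul_rpow hM0 (norm_nonneg _)).symm

noncomputable def mulShift (c : α → ℂ) (e : α ≃ α) {M : ℝ} (hM0 : 0 ≤ M)
    (hM : ∀ n, ‖c n‖ ≤ M) : lp (fun _ : α => ℂ) 2 →L[ℂ] lp (fun _ : α => ℂ) 2 :=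
  LinearMap.mkContinuous
    { toFun := fun u => ⟨fun n => c n * (u : ∀ _ : α, ℂ) (e n),
        memℓp_gen' (mulShift_sum_bound c e hM0 hM u)⟩
      map_add' := fun u v => by
        apply lp.ext
        funext n
        simp only [lp.coeFn_add, Pi.add_apply]
        exact mul_add _ _ _
      map_smul' := fun a u => by
        apply lp.ext
        funext n
        simp only [lp.coeFn_smul, Pi.smul_apply, smul_eq_mul, RingHom.id_apply]
        ring }
    M
    (fun u => lp.norm_le_of_forall_sum_le (by norm_num)
      (mul_nonneg hM0 (norm_nonneg _)) (fun s => mulShift_sum_bound c e hM0 hM u s))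

@[simp] lemma mulShift_apply (c : α → ℂ) (e : α ≃ α) {M : ℝ} (hM0 : 0 ≤ M)
    (hM : ∀ n, ‖c n‖ ≤ M) (u : lp (fun _ : α => ℂ) 2) (n : α) :
    (mulShift c e hM0 hM u : ∀ _ : α, ℂ) n = c n * (u : ∀ _ : α, ℂ) (e n) := rfl

end mulShift

private lemma sqrt_est {x y : ℝ} (hx : 1 ≤ x) (hy : 1 ≤ y)
    (hxy : |x - y| ≤ 3 * Real.sqrt y) :
    |Real.sqrt x - Real.sqrt y| ≤ 3 ∧ Real.sqrt y ≤ 4 * Real.sqrt x := by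
  set a := Real.sqrt x with ha'
  set b := Real.sqrt y with hb'
  have ha : 1 ≤ a := by rw [ha', show (1:ℝ) = Real.sqrt 1 by simp]; exact Real.sqrt_le_sqrt hx
  have hb : 1 ≤ b := by rw [hb', show (1:ℝ) = Real.sqrt 1 by simp]; exact Real.sqrt_le_sqrt hy
  have hx2 : a ^ 2 = x := Real.sq_sqrt (by linarith)
  have hy2 : b ^ 2 = y := Real.sq_sqrt (by linarith)
  have hprod : |a - b| * (a + b) = |x - y| := by
    calc |a - b| * (a + b) = |a - b| * |a + b| := by rw [abs_of_nonneg (by linarith : (0:ℝ) ≤ a + b)]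
      _ = |(a - b) * (a + b)| := (abs_mul _ _).symm
      _ = |x - y| := by rw [show (a - b) * (a + b) = x - y by rw [← hx2, ← hy2]; ring]
  have h3 : |a - b| ≤ 3 := by
    have h4 : |a - b| * (a + b) ≤ 3 * (a + b) := by
      rw [hprod]
      calc |x - y| ≤ 3 * b := hxy
        _ ≤ 3 * (a + b) := by linarith
    exact le_of_mul_le_mul_right h4 (by linarith)
  refine ⟨h3, ?_⟩
  have hba : b - a ≤ |a - b| := by rw [abs_sub_comm]; exact le_abs_self _
  linarith

private lemma key_est {r : ℝ} (hr : 0 ≤ r) {x y : ℝ} (hx : 1 ≤ x) (hy : 1 ≤ y)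
    (hxy : |x - y| ≤ 3 * Real.sqrt y) :
    |Real.sqrt y ^ r * (Real.sqrt x - Real.sqrt y) * (Real.sqrt x ^ r)⁻¹|
      ≤ 3 * 4 ^ r := by
  obtain ⟨h3, h4⟩ := sqrt_est hx hy hxy
  set a := Real.sqrt x with ha'
  set b := Real.sqrt y with hb'
  have ha : 1 ≤ a := by rw [ha', show (1:ℝ) = Real.sqrt 1 by simp]; exact Real.sqrt_le_sqrt hx
  have hb : 1 ≤ b := by rw [hb', show (1:ℝ) = Real.sqrt 1 by simp]; exact Real.sqrt_le_sqrt hy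
  have hap : 0 < a ^ r := Real.rpow_pos_of_pos (by linarith) r
  have hbr : b ^ r ≤ 4 ^ r * a ^ r := by
    calc b ^ r ≤ (4 * a) ^ r := Real.rpow_le_rpow (by linarith) h4 hr
      _ = 4 ^ r * a ^ r := Real.mul_rpow (by norm_num) (by linarith)
  rw [abs_mul, abs_mul, abs_inv,
    abs_of_nonneg (Real.rpow_nonneg (by linarith : (0:ℝ) ≤ b) r),
    abs_of_nonneg (Real.rpow_nonneg (by linarith : (0:ℝ) ≤ a) r)]
  calc b ^ r * |a - b| * (a ^ r)⁻¹
      ≤ (4 ^ r * a ^ r) * 3 * (a ^ r)⁻¹ := by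
        have h1 : b ^ r * |a - b| ≤ (4 ^ r * a ^ r) * 3 :=
          mul_le_mul hbr h3 (abs_nonneg _) (by positivity)
        exact mul_le_mul_of_nonneg_right h1 (by positivity)
    _ = 3 * 4 ^ r := by field_simp

private lemma S_one_le {d : ℕ} (n : Fin d → ℤ) : 1 ≤ 1 + ∑ j, ((n j : ℝ)) ^ 2 := by
  have : (0:ℝ) ≤ ∑ j, ((n j : ℝ)) ^ 2 := Finset.sum_nonneg fun j _ => sq_nonneg _
  linarith

private lemma abs_entry_le {d : ℕ} (n : Fin d → ℤ) (i : Fin d) :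
    |(n i : ℝ)| ≤ Real.sqrt (1 + ∑ j, ((n j : ℝ)) ^ 2) := by
  have h1 : ((n i : ℝ)) ^ 2 ≤ 1 + ∑ j, ((n j : ℝ)) ^ 2 := by
    have := Finset.single_le_sum (f := fun j => ((n j : ℝ)) ^ 2)
      (fun j _ => sq_nonneg _) (Finset.mem_univ i)
    linarith
  calc |(n i : ℝ)| = Real.sqrt (((n i : ℝ)) ^ 2) := (Real.sqrt_sq_eq_abs _).symm
    _ ≤ _ := Real.sqrt_le_sqrt h1

private lemma S_add {d : ℕ} (n : Fin d → ℤ) (i : Fin d) (ε : ℤ) :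
    (1 + ∑ j, (((n + Pi.single i ε : Fin d → ℤ) j : ℝ)) ^ 2)
      = (1 + ∑ j, ((n j : ℝ)) ^ 2) + (2 * (ε:ℝ) * (n i : ℝ) + (ε:ℝ) ^ 2) := by
  have h : ∀ j : Fin d, ((((n + Pi.single i ε : Fin d → ℤ)) j : ℝ)) ^ 2
      = ((n j : ℝ)) ^ 2 + (if j = i then 2 * (ε:ℝ) * (n j : ℝ) + (ε:ℝ) ^ 2 else 0) := by
    intro j
    rcases eq_or_ne j i with h | h
    · subst h
      simp only [Pi.add_apply, Pi.single_eq_same, if_pos rfl]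
      push_cast
      ring
    · simp [Pi.single_eq_of_ne h, h]
  rw [Finset.sum_congr rfl fun j _ => h j, Finset.sum_add_distrib,
    Finset.sum_ite_eq' Finset.univ i]
  simp only [Finset.mem_univ, if_pos]
  ring

/-- Japanese bracket `⟨n⟩ = (1 + |n|²)^{1/2}` on `ℤ^d`. -/
noncomputable def jbr {d : ℕ} (n : Fin d → ℤ) : ℝ :=
  Real.sqrt (1 + ∑ i, ((n i : ℝ)) ^ 2)

private lemma coeff_bound {d : ℕ} {r : ℝ} (hr : 0 ≤ r) (n : Fin d → ℤ) (i : Fin d)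
    (ε : ℤ) (hε : ε = 1 ∨ ε = -1) :
    ‖((jbr n ^ r * (jbr (n + Pi.single i ε) - jbr n)
        * (jbr (n + Pi.single i ε) ^ r)⁻¹ : ℝ) : ℂ)‖ ≤ 3 * 4 ^ r := by
  rw [Complex.norm_real, Real.norm_eq_abs]
  have h1 : (1:ℝ) ≤ 1 + ∑ j, ((n j : ℝ)) ^ 2 := S_one_le n
  have h1' : (1:ℝ) ≤ 1 + ∑ j, (((n + Pi.single i ε : Fin d → ℤ) j : ℝ)) ^ 2 := S_one_le _
  have hsq : 1 ≤ Real.sqrt (1 + ∑ j, ((n j : ℝ)) ^ 2) := by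
    rw [show (1:ℝ) = Real.sqrt 1 by simp]
    exact Real.sqrt_le_sqrt (by simpa using h1)
  have habs := abs_entry_le n i
  have hεabs : |(ε:ℝ)| = 1 := by rcases hε with h | h <;> simp [h]
  have hxy : |(1 + ∑ j, (((n + Pi.single i ε : Fin d → ℤ) j : ℝ)) ^ 2)
      - (1 + ∑ j, ((n j : ℝ)) ^ 2)| ≤ 3 * Real.sqrt (1 + ∑ j, ((n j : ℝ)) ^ 2) := by
    rw [S_add n i ε, add_sub_cancel_left]
    calc |2 * (ε:ℝ) * (n i : ℝ) + (ε:ℝ) ^ 2|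
        ≤ |2 * (ε:ℝ) * (n i : ℝ)| + |(ε:ℝ) ^ 2| := abs_add_le _ _
      _ = 2 * |(n i : ℝ)| + 1 := by
          rw [abs_mul, abs_mul, hεabs, abs_pow, hεabs]; norm_num
      _ ≤ 3 * Real.sqrt (1 + ∑ j, ((n j : ℝ)) ^ 2) := by linarith
  exact key_est hr h1' h1 hxy

/-- On `ℓ²(ℤ^d)`, with `H₀` the discrete Laplacian and `H` multiplication
by `⟨n⟩`, for every `r > 0` the operator `H^r [H₀, H] H^{-r}`, which acts as
`u(n) ↦ Σ_{|ε|=1} ⟨n⟩^r (⟨n+ε⟩ − ⟨n⟩) ⟨n+ε⟩^{-r} u(n+ε)`, is a bounded operator on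
`ℓ²(ℤ^d)`; equivalently `[H₀,H]` is bounded on the weighted space `𝓗^{2r}`. -/
theorem discrete_commutator_weighted_bounded (d : ℕ) (r : ℝ) (hr : 0 < r) :
    ∃ (T : lp (fun _ : (Fin d → ℤ) => ℂ) 2 →L[ℂ] lp (fun _ : (Fin d → ℤ) => ℂ) 2) (C : ℝ),
      ‖T‖ ≤ C ∧
      ∀ (u : lp (fun _ : (Fin d → ℤ) => ℂ) 2) (n : Fin d → ℤ),
        (T u : ∀ _ : (Fin d → ℤ), ℂ) n =
          ∑ i : Fin d,
            (((jbr n ^ r * (jbr (n + Pi.single i 1) - jbr n)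
                  * (jbr (n + Pi.single i 1) ^ r)⁻¹ : ℝ) : ℂ)
                * (u : ∀ _ : (Fin d → ℤ), ℂ) (n + Pi.single i 1)
              + ((jbr n ^ r * (jbr (n - Pi.single i 1) - jbr n)
                  * (jbr (n - Pi.single i 1) ^ r)⁻¹ : ℝ) : ℂ)
                * (u : ∀ _ : (Fin d → ℤ), ℂ) (n - Pi.single i 1)) := by
  classical
  have hr0 : 0 ≤ r := hr.le
  have hM0 : (0:ℝ) ≤ 3 * 4 ^ r := by positivity
  have heq : ∀ (n : Fin d → ℤ) (i : Fin d),
      n + Pi.single i (-1 : ℤ) = n - Pi.single i 1 := by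
    intro n i
    funext j
    rcases eq_or_ne j i with h | h
    · subst h; simp [sub_eq_add_neg]
    · simp [Pi.single_eq_of_ne h]
  set cplus : Fin d → (Fin d → ℤ) → ℂ := fun i n =>
    ((jbr n ^ r * (jbr (n + Pi.single i 1) - jbr n)
      * (jbr (n + Pi.single i 1) ^ r)⁻¹ : ℝ) : ℂ) with hcplus
  set cminus : Fin d → (Fin d → ℤ) → ℂ := fun i n =>
    ((jbr n ^ r * (jbr (n - Pi.single i 1) - jbr n)
      * (jbr (n - Pi.single i 1) ^ r)⁻¹ : ℝ) : ℂ) with hcminus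
  have hMp : ∀ i n, ‖cplus i n‖ ≤ 3 * 4 ^ r := fun i n =>
    coeff_bound hr0 n i 1 (Or.inl rfl)
  have hMm : ∀ i n, ‖cminus i n‖ ≤ 3 * 4 ^ r := by
    intro i n
    have h := coeff_bound hr0 n i (-1) (Or.inr rfl)
    rw [heq n i] at h
    exact h
  set T : lp (fun _ : (Fin d → ℤ) => ℂ) 2 →L[ℂ] lp (fun _ : (Fin d → ℤ) => ℂ) 2 :=
    ∑ i : Fin d,
      (mulShift (cplus i) (Equiv.addRight (Pi.single i 1)) hM0 (hMp i)
        + mulShift (cminus i) (Equiv.subRight (Pi.single i 1)) hM0 (hMm i)) with hT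
  refine ⟨T, ‖T‖, le_rfl, fun u n => ?_⟩
  have hTu : T u = ∑ i : Fin d,
      (mulShift (cplus i) (Equiv.addRight (Pi.single i 1)) hM0 (hMp i) u
        + mulShift (cminus i) (Equiv.subRight (Pi.single i 1)) hM0 (hMm i) u) := by
    rw [hT, ContinuousLinearMap.sum_apply]
    exact Finset.sum_congr rfl fun i _ => rfl
  rw [hTu, lp.coeFn_sum, Finset.sum_apply]
  refine Finset.sum_congr rfl fun i _ => ?_
  rw [lp.coeFn_add, Pi.add_apply, mulShift_apply, mulShift_apply]
  simp only [Equiv.coe_addRight, Equiv.subRight_apply, hcplus, hcminus]
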